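/- Let p, q, r ∈ ℂ[x,y,z] with ℂ(p,q,r,x,y) = ℂ(x,y,z) and x, y algebraic over ℂ(p,q,r). Then there exist u ∈ ℂ[p,q,r,x,y] \ {0} and v ∈ ℂ[p,q,r] \ {0} such that z = u/v in ℂ(x,y,z). -/

import Mathlib

open MvPolynomial

noncomputable section

/-- Three-variable analogue: if `ℂ(p,q,r,x,y) = ℂ(x,y,z)` and `x, y` are algebraic over
`ℂ(p,q,r)`, then `z = u/v` for some `u ∈ ℂ[p,q,r,x,y] \ {0}` and `v ∈ ℂ[p,q,r] \ {0}`. -/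
theorem z_eq_u_div_v_three_vars
    (p q r : MvPolynomial (Fin 3) ℂ)
    (P Q R x y z : FractionRing (MvPolynomial (Fin 3) ℂ))
    (hP : P = algebraMap (MvPolynomial (Fin 3) ℂ) _ p)
    (hQ : Q = algebraMap (MvPolynomial (Fin 3) ℂ) _ q)
    (hR : R = algebraMap (MvPolynomial (Fin 3) ℂ) _ r)
    (hx : x = algebraMap (MvPolynomial (Fin 3) ℂ) _ (X 0))
    (hy : y = algebraMap (MvPolynomial (Fin 3) ℂ) _ (X 1))
    (hz : z = algebraMap (MvPolynomial (Fin 3) ℂ) _ (X 2))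
    (hfrac : IntermediateField.adjoin ℂ {P, Q, R, x, y} = ⊤)
    (halgx : IsAlgebraic (IntermediateField.adjoin ℂ {P, Q, R}) x)
    (halgy : IsAlgebraic (IntermediateField.adjoin ℂ {P, Q, R}) y) :
    ∃ u ∈ Algebra.adjoin ℂ ({P, Q, R, x, y} : Set (FractionRing (MvPolynomial (Fin 3) ℂ))),
      ∃ v ∈ Algebra.adjoin ℂ ({P, Q, R} : Set (FractionRing (MvPolynomial (Fin 3) ℂ))),
        u ≠ 0 ∧ v ≠ 0 ∧ z = u / v := by
  let F := FractionRing (MvPolynomial (Fin 3) ℂ)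
  let K := IntermediateField.adjoin ℂ ({P, Q, R} : Set F)
  let B := Algebra.adjoin ℂ ({P, Q, R} : Set F)
  let A := Algebra.adjoin ℂ ({P, Q, R, x, y} : Set F)
  -- B ⊆ A
  have hBA : (B : Set F) ⊆ A := by
    apply Algebra.adjoin_mono
    intro w hw
    simp only [Set.mem_insert_iff, Set.mem_singleton_iff] at hw ⊢
    tauto
  -- elements of K are quotients from B
  have hK : ∀ c : F, c ∈ K → ∃ a ∈ B, ∃ b ∈ B, b ≠ 0 ∧ c = a / b := by
    intro c hc
    rcases eq_or_ne c 0 with rfl | hc0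
    · exact ⟨0, Subalgebra.zero_mem _, 1, Subalgebra.one_mem _, one_ne_zero, by simp⟩
    · rw [IntermediateField.mem_adjoin_iff] at hc
      obtain ⟨r', s', hrs⟩ := hc
      have hmem : ∀ t : MvPolynomial ({P, Q, R} : Set F) ℂ,
          MvPolynomial.aeval Subtype.val t ∈ B := by
        intro t
        have : MvPolynomial.aeval (Subtype.val : ({P,Q,R} : Set F) → F) t ∈
            (MvPolynomial.aeval (Subtype.val : ({P,Q,R} : Set F) → F)).range :=
          Set.mem_range_self t
        rwa [← Algebra.adjoin_range_eq_range_aeval, Subtype.range_coe] at this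
      refine ⟨_, hmem r', _, hmem s', ?_, hrs⟩
      intro h0
      rw [h0, div_zero] at hrs
      exact hc0 hrs
  -- x, y algebraic over K, so z ∈ Algebra.adjoin K {x, y}
  have hsets : ({P, Q, R} : Set F) ∪ {x, y} = {P, Q, R, x, y} := by
    ext w; simp only [Set.mem_union, Set.mem_insert_iff, Set.mem_singleton_iff]; tauto
  have htop : (IntermediateField.adjoin K ({x, y} : Set F)).restrictScalars ℂ = ⊤ := by
    rw [IntermediateField.adjoin_adjoin_left, hsets, hfrac]
  have hzK : z ∈ IntermediateField.adjoin K ({x, y} : Set F) := by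
    have : z ∈ (IntermediateField.adjoin K ({x, y} : Set F)).restrictScalars ℂ := by
      rw [htop]; trivial
    exact this
  have halg : ∀ w ∈ ({x, y} : Set F), IsAlgebraic K w := by
    rintro w (rfl | rfl)
    · exact halgx
    · exact halgy
  have hzA : z ∈ Algebra.adjoin K ({x, y} : Set F) := by
    have := IntermediateField.adjoin_toSubalgebra_of_isAlgebraic halg
    rw [← this]
    exact hzK
  -- main induction
  have key : ∀ w : F, w ∈ Algebra.adjoin K ({x, y} : Set F) →
      ∃ u ∈ A, ∃ v ∈ B, v ≠ 0 ∧ w = u / v := by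
    intro w hw
    induction hw using Algebra.adjoin_induction with
    | mem w hw =>
        refine ⟨w, ?_, 1, Subalgebra.one_mem _, one_ne_zero, by simp⟩
        apply Algebra.subset_adjoin
        rcases hw with rfl | rfl
        · simp
        · simp
    | algebraMap c =>
        obtain ⟨a, ha, b, hb, hb0, hab⟩ := hK (c : F) c.2
        exact ⟨a, hBA ha, b, hb, hb0, hab⟩
    | add w₁ w₂ h₁ h₂ ih₁ ih₂ =>
        obtain ⟨u₁, hu₁, v₁, hv₁, hv₁0, rfl⟩ := ih₁
        obtain ⟨u₂, hu₂, v₂, hv₂, hv₂0, rfl⟩ := ih₂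
        refine ⟨u₁ * v₂ + u₂ * v₁, ?_, v₁ * v₂, mul_mem hv₁ hv₂,
          mul_ne_zero hv₁0 hv₂0, ?_⟩
        · exact add_mem (mul_mem hu₁ (hBA hv₂)) (mul_mem hu₂ (hBA hv₁))
        · rw [div_add_div _ _ hv₁0 hv₂0]
          rw [mul_comm v₁ u₂]
    | mul w₁ w₂ h₁ h₂ ih₁ ih₂ =>
        obtain ⟨u₁, hu₁, v₁, hv₁, hv₁0, rfl⟩ := ih₁
        obtain ⟨u₂, hu₂, v₂, hv₂, hv₂0, rfl⟩ := ih₂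
        exact ⟨u₁ * u₂, mul_mem hu₁ hu₂, v₁ * v₂, mul_mem hv₁ hv₂,
          mul_ne_zero hv₁0 hv₂0, div_mul_div_comm _ _ _ _⟩
  obtain ⟨u, hu, v, hv, hv0, huv⟩ := key z hzA
  have hz0 : z ≠ 0 := by
    rw [hz]
    intro h
    have := (map_eq_zero_iff _
      (IsFractionRing.injective (MvPolynomial (Fin 3) ℂ) F)).mp h
    exact MvPolynomial.X_ne_zero 2 this
  have hu0 : u ≠ 0 := by
    intro h
    rw [h, zero_div] at huv
    exact hz0 huv
  exact ⟨u, hu, v, hv, hu0, hv0, huv⟩
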